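/- arXiv:1708.00823 — 2 statements merged into one kernel-verified Lean document; each statement's English description precedes it below -/
import Mathlib

section
/- Suppose w : [0,T] → ℝ^d is (ρ,γ)-irregular with norm ‖Φ^w‖_{ρ,γ} := sup_{a ∈ ℝ^d} sup_{0 ≤ s < t ≤ T} (1+|a|)^ρ |∫_s^t exp(i⟨a,w_r⟩) dr| / (t-s)^γ < ∞. Then for every κ ∈ (0,1), w is (ρκ, 1 - κ(1-γ))-irregular and moreover ‖Φ^w‖_{ρκ, 1-κ(1-γ)} ≤ 2^{1-κ} ‖Φ^w‖_{ρ,γ}^κ. -/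
open MeasureTheory Real

/-- Interpolation of `(ρ,γ)`-irregularity: a `(ρ,γ)`-irregular path is
`(ρκ, 1-κ(1-γ))`-irregular with norm at most `2^(1-κ) M^κ`. -/
theorem stmt_1 (T : ℝ) (hT : 0 < T) (d : ℕ) (hd : 1 ≤ d) (ρ γ : ℝ) (hρ : 0 < ρ) (hγ : 0 < γ)
    (w : ℝ → EuclideanSpace ℝ (Fin d)) (hw : ContinuousOn w (Set.Icc 0 T))
    (M : ℝ) (hM : 0 ≤ M)
    (hirr : ∀ (a : EuclideanSpace ℝ (Fin d)) (s t : ℝ), 0 ≤ s → s < t → t ≤ T →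
      (1 + ‖a‖) ^ ρ * ‖∫ r in s..t, Complex.exp ((inner ℝ a (w r) : ℝ) * Complex.I)‖
        ≤ M * (t - s) ^ γ)
    (κ : ℝ) (hκ : κ ∈ Set.Ioo (0:ℝ) 1) :
    ∀ (a : EuclideanSpace ℝ (Fin d)) (s t : ℝ), 0 ≤ s → s < t → t ≤ T →
      (1 + ‖a‖) ^ (ρ * κ) * ‖∫ r in s..t, Complex.exp ((inner ℝ a (w r) : ℝ) * Complex.I)‖
        ≤ 2 ^ (1 - κ) * M ^ κ * (t - s) ^ (1 - κ * (1 - γ)) := by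
  obtain ⟨hκ0, hκ1⟩ := hκ
  intro a s t hs hst htT
  set I : ℝ := ‖∫ r in s..t, Complex.exp ((inner ℝ a (w r) : ℝ) * Complex.I)‖ with hI
  have hts : (0:ℝ) < t - s := by linarith
  have hI0 : 0 ≤ I := norm_nonneg _
  have ha : (0:ℝ) < 1 + ‖a‖ := by positivity
  -- trivial bound
  have htriv : I ≤ t - s := by
    have := intervalIntegral.norm_integral_le_of_norm_le_const
      (C := 1) (f := fun r => Complex.exp ((inner ℝ a (w r) : ℝ) * Complex.I))
      (a := s) (b := t) (by
        intro x _
        exact le_of_eq (by rw [Complex.norm_exp_ofReal_mul_I]))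
    calc I ≤ 1 * |t - s| := this
    _ = t - s := by rw [one_mul, abs_of_pos hts]
  have hbound := hirr a s t hs hst htT
  -- key interpolation
  have key : (1 + ‖a‖) ^ (ρ * κ) * I ≤ M ^ κ * (t - s) ^ (1 - κ * (1 - γ)) := by
    have hIdecomp : I = I ^ κ * I ^ (1 - κ) := by
      rw [← Real.rpow_add' hI0 (by norm_num)]
      simp
    have h1 : (1 + ‖a‖) ^ (ρ * κ) * I
        = ((1 + ‖a‖) ^ ρ * I) ^ κ * I ^ (1 - κ) := by
      calc (1 + ‖a‖) ^ (ρ * κ) * I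
          = ((1 + ‖a‖) ^ ρ) ^ κ * (I ^ κ * I ^ (1 - κ)) := by
            rw [Real.rpow_mul ha.le, ← hIdecomp]
        _ = ((1 + ‖a‖) ^ ρ * I) ^ κ * I ^ (1 - κ) := by
            rw [Real.mul_rpow (by positivity) hI0]; ring
    rw [h1]
    have h2 : ((1 + ‖a‖) ^ ρ * I) ^ κ ≤ (M * (t - s) ^ γ) ^ κ :=
      Real.rpow_le_rpow (by positivity) hbound hκ0.le
    have h3 : I ^ (1 - κ) ≤ (t - s) ^ (1 - κ) :=
      Real.rpow_le_rpow hI0 htriv (by linarith)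
    calc ((1 + ‖a‖) ^ ρ * I) ^ κ * I ^ (1 - κ)
        ≤ (M * (t - s) ^ γ) ^ κ * (t - s) ^ (1 - κ) := by
          apply mul_le_mul h2 h3 (by positivity) (by positivity)
      _ = M ^ κ * (t - s) ^ (1 - κ * (1 - γ)) := by
          rw [Real.mul_rpow hM (by positivity), ← Real.rpow_mul hts.le, mul_assoc,
            ← Real.rpow_add hts]
          ring_nf
  have h2κ : (1:ℝ) ≤ 2 ^ (1 - κ) :=
    Real.one_le_rpow (by norm_num) (by linarith)
  calc (1 + ‖a‖) ^ (ρ * κ) * I ≤ M ^ κ * (t - s) ^ (1 - κ * (1 - γ)) := key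
    _ ≤ 2 ^ (1 - κ) * (M ^ κ * (t - s) ^ (1 - κ * (1 - γ))) := by
        exact le_mul_of_one_le_left (by positivity) h2κ
    _ = 2 ^ (1 - κ) * M ^ κ * (t - s) ^ (1 - κ * (1 - γ)) := by ring
end

section
/- Let w : [0,T] → ℝ^d be (ρ,γ)-irregular with constant M = ‖Φ^w‖_{ρ,γ}, let s ∈ [0,T], a ∈ ℝ^d, b ≥ 1, and define Ψ(a,b) = ∫_0^{T-s} exp(i⟨a, w_{r+s} - w_s⟩ - 2br) dr. Then for every θ with γ < θ < γ + 1 there is a constant C (depending on θ, γ, T) such that |Ψ(a,b)| ≤ C M b^{1-θ} / (1 + |a|^ρ). -/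
open MeasureTheory Real

lemma exp_neg_le_aux {q x : ℝ} (hq : 0 < q) (hx : 0 < x) :
    Real.exp (-x) ≤ q ^ q * x ^ (-q) := by
  have h1 : x ≤ q * Real.exp (x / q) := by
    have := Real.add_one_le_exp (x / q)
    have h2 : x / q ≤ Real.exp (x / q) := by linarith
    calc x = q * (x / q) := by field_simp
    _ ≤ q * Real.exp (x / q) := by nlinarith
  have h3 : x ^ q ≤ q ^ q * Real.exp x := by
    calc x ^ q ≤ (q * Real.exp (x / q)) ^ q :=
          Real.rpow_le_rpow hx.le h1 hq.le
      _ = q ^ q * (Real.exp (x / q)) ^ q := Real.mul_rpow hq.le (Real.exp_pos _).le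
      _ = q ^ q * Real.exp x := by
          rw [Real.rpow_def_of_pos (Real.exp_pos _), Real.log_exp]
          field_simp
  have hxq : (0:ℝ) < x ^ q := Real.rpow_pos_of_pos hx q
  have he : (0:ℝ) < Real.exp x := Real.exp_pos x
  rw [Real.rpow_neg hx.le, Real.exp_neg]
  rw [inv_le_iff_one_le_mul₀ he]
  have heq : q ^ q * (x ^ q)⁻¹ * Real.exp x = (q ^ q * Real.exp x) * (x ^ q)⁻¹ := by ring
  rw [heq, ← div_eq_mul_inv, le_div_iff₀ hxq, one_mul]
  exact h3

set_option maxHeartbeats 1000000 in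
/-- Decay of the damped oscillating integral `Ψ` for a `(ρ,γ)`-irregular path. -/
theorem stmt_6 (T : ℝ) (hT : 0 < T) (d : ℕ) (hd : 1 ≤ d) (ρ γ θ : ℝ)
    (hρ : 0 < ρ) (hγ : 0 < γ) (hθ : θ ∈ Set.Ioo γ (γ + 1)) :
    ∃ C : ℝ, 0 < C ∧
      ∀ (w : ℝ → EuclideanSpace ℝ (Fin d)), ContinuousOn w (Set.Icc 0 T) →
      ∀ M : ℝ, 0 ≤ M →
      (∀ (a : EuclideanSpace ℝ (Fin d)) (s t : ℝ), 0 ≤ s → s < t → t ≤ T →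
        (1 + ‖a‖) ^ ρ * ‖∫ r in s..t, Complex.exp ((inner ℝ a (w r) : ℝ) * Complex.I)‖
          ≤ M * (t - s) ^ γ) →
      ∀ s ∈ Set.Icc (0:ℝ) T, ∀ (a : EuclideanSpace ℝ (Fin d)) (b : ℝ), 1 ≤ b →
        ‖∫ r in (0:ℝ)..(T - s),
            Complex.exp ((inner ℝ a (w (r + s) - w s) : ℝ) * Complex.I - 2 * b * r)‖
          ≤ C * M * b ^ (1 - θ) / (1 + ‖a‖ ^ ρ) := by
  obtain ⟨hγθ, hθγ1⟩ := hθ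
  have hθ0 : 0 < θ := hγ.trans hγθ
  obtain ⟨p, hp_def⟩ : ∃ p : ℝ, p = (θ - γ + 1) / 2 := ⟨_, rfl⟩
  have hp0 : 0 < p := by rw [hp_def]; linarith
  have hp1 : p < 1 := by rw [hp_def]; linarith
  have hpθ : θ - γ ≤ p := by rw [hp_def]; linarith
  obtain ⟨q, hq_def⟩ : ∃ q : ℝ, q = γ + p := ⟨_, rfl⟩
  have hq0 : 0 < q := by rw [hq_def]; linarith
  obtain ⟨K1, hK1_def⟩ : ∃ K1 : ℝ, K1 = 1 + (γ + 1) ^ (γ + 1) := ⟨_, rfl⟩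
  obtain ⟨K2, hK2_def⟩ : ∃ K2 : ℝ, K2 = 2 * q ^ q * (1 + T) / (1 - p) := ⟨_, rfl⟩
  have hγ1pos : (0:ℝ) < (γ + 1) ^ (γ + 1) := Real.rpow_pos_of_pos (by linarith) _
  have hqq : (0:ℝ) < q ^ q := Real.rpow_pos_of_pos hq0 _
  have hK1pos : 1 ≤ K1 := by rw [hK1_def]; linarith
  have hK2pos : 0 < K2 := by
    rw [hK2_def]
    have h1p : (0:ℝ) < 1 - p := by linarith
    positivity
  refine ⟨2 * (K1 + K2), by linarith, ?_⟩
  intro w hw M hM hirr s hs a b hb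
  have hb0 : 0 < b := one_pos.trans_le hb
  have hbθ : 0 < b ^ (1-θ) := Real.rpow_pos_of_pos hb0 _
  obtain ⟨A, hA_def⟩ : ∃ A : ℝ, A = (1 + ‖a‖) ^ ρ := ⟨_, rfl⟩
  have hA1 : 1 ≤ A := by
    rw [hA_def]; exact Real.one_le_rpow (by linarith [norm_nonneg a]) hρ.le
  have hA0 : 0 < A := lt_of_lt_of_le one_pos hA1
  have haρ : 0 ≤ ‖a‖ ^ ρ := Real.rpow_nonneg (norm_nonneg a) ρ
  have hRHSfac : M / A ≤ 2 * M / (1 + ‖a‖ ^ ρ) := by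
    have h1 : ‖a‖ ^ ρ ≤ A := by
      rw [hA_def]
      exact Real.rpow_le_rpow (norm_nonneg a) (by linarith) hρ.le
    rw [div_le_div_iff₀ hA0 (by linarith)]
    nlinarith
  have hL0 : 0 ≤ T - s := by linarith [hs.2]
  rcases eq_or_lt_of_le hL0 with hL0' | hLpos
  · rw [← hL0', intervalIntegral.integral_same, norm_zero]
    have : (0:ℝ) ≤ 2 * (K1 + K2) * M * b ^ (1-θ) :=
      mul_nonneg (mul_nonneg (by linarith) hM) hbθ.le
    exact div_nonneg this (by linarith)
  set L : ℝ := T - s with hL_def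
  -- the clamped path, continuous on all of ℝ
  have hπcont : Continuous (fun x : ℝ => max 0 (min x T)) :=
    continuous_const.max (continuous_id.min continuous_const)
  have hπmem : ∀ x : ℝ, max 0 (min x T) ∈ Set.Icc (0:ℝ) T :=
    fun x => ⟨le_max_left _ _, max_le hT.le (min_le_right _ _)⟩
  have hπid : ∀ x ∈ Set.Icc (0:ℝ) T, max 0 (min x T) = x := by
    intro x hx; rw [min_eq_left hx.2, max_eq_right hx.1]
  have hw'cont : Continuous (fun x : ℝ => w (max 0 (min x T))) :=
    hw.comp_continuous hπcont hπmem
  obtain ⟨c, hc_def⟩ : ∃ c : ℂ, c = Complex.exp (((-(inner ℝ a (w s)) : ℝ) : ℂ) * Complex.I) :=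
    ⟨_, rfl⟩
  have hc1 : ‖c‖ = 1 := by rw [hc_def]; exact Complex.norm_exp_ofReal_mul_I _
  obtain ⟨g0, hg0_def⟩ : ∃ g0 : ℝ → ℂ,
      g0 = fun r => Complex.exp (((inner ℝ a (w (max 0 (min r T))) : ℝ) : ℂ) * Complex.I) :=
    ⟨_, rfl⟩
  have hg0cont : Continuous g0 := by
    rw [hg0_def]
    exact ((Complex.continuous_ofReal.comp (continuous_const.inner hw'cont)).mul
      continuous_const).cexp
  obtain ⟨g, hg_def⟩ : ∃ g : ℝ → ℂ, g = fun r => g0 (r + s) * c := ⟨_, rfl⟩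
  have hgcont : Continuous g := by
    rw [hg_def]
    exact (hg0cont.comp (continuous_id.add continuous_const)).mul continuous_const
  obtain ⟨F, hF_def⟩ : ∃ F : ℝ → ℂ, F = fun t => ∫ r in (0:ℝ)..t, g r := ⟨_, rfl⟩
  have hFderiv : ∀ t : ℝ, HasDerivAt F (g t) t := by
    intro t; rw [hF_def]; exact (hgcont.integral_hasStrictDerivAt 0 t).hasDerivAt
  obtain ⟨u, hu_def⟩ : ∃ u : ℝ → ℂ, u = fun t => Complex.exp (((-(2*b*t) : ℝ) : ℂ)) := ⟨_, rfl⟩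
  have hucont : Continuous u := by
    rw [hu_def]
    exact (Complex.continuous_ofReal.comp ((continuous_const.mul continuous_id).neg)).cexp
  have huderiv : ∀ t : ℝ, HasDerivAt u (((-(2*b) : ℝ) : ℂ) * u t) t := by
    intro t
    have h1 : HasDerivAt (fun t : ℝ => -(2 * b * t)) (-(2*b)) t := by
      exact (((hasDerivAt_id t).const_mul (2*b)).neg).congr_deriv (by ring)
    rw [hu_def]
    simpa [mul_comm] using (h1.ofReal_comp).cexp
  have hunorm : ∀ t : ℝ, ‖u t‖ = Real.exp (-(2*b*t)) := by
    intro t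
    rw [hu_def, Complex.norm_exp_ofReal]
  -- bound on F
  have hFbound : ∀ t : ℝ, 0 ≤ t → t ≤ L → ‖F t‖ ≤ M * t ^ γ / A := by
    intro t ht0 htL
    rcases eq_or_lt_of_le ht0 with h0 | h0
    · rw [hF_def, ← h0]
      simp only [intervalIntegral.integral_same, norm_zero]
      rw [Real.zero_rpow hγ.ne', mul_zero, zero_div]
    · have key : F t = (∫ r in s..(t+s), g0 r) * c := by
        rw [hF_def]
        simp only [hg_def]
        rw [intervalIntegral.integral_mul_const]
        congr 1
        have := intervalIntegral.integral_comp_add_right (a := (0:ℝ)) (b := t) g0 s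
        rwa [zero_add] at this
      have hcongr : Set.EqOn g0
          (fun r => Complex.exp (((inner ℝ a (w r) : ℝ) : ℂ) * Complex.I))
          (Set.uIcc s (t+s)) := by
        intro r hr
        rw [Set.uIcc_of_le (by linarith)] at hr
        have hrT : r ∈ Set.Icc (0:ℝ) T := ⟨by linarith [hr.1, hs.1], by linarith [hr.2, htL]⟩
        rw [hg0_def]
        simp only [hπid r hrT]
      have hI := hirr a s (t+s) hs.1 (by linarith) (by linarith [htL])
      rw [add_sub_cancel_right, ← hA_def] at hI
      rw [key, norm_mul, hc1, mul_one, intervalIntegral.integral_congr hcongr]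
      rw [le_div_iff₀ hA0]
      calc ‖∫ r in s..(t+s), Complex.exp (((inner ℝ a (w r) : ℝ) : ℂ) * Complex.I)‖ * A
          = A * ‖∫ r in s..(t+s), Complex.exp (((inner ℝ a (w r) : ℝ) : ℂ) * Complex.I)‖ := by ring
        _ ≤ M * t ^ γ := hI
  -- integration by parts
  have ibp := intervalIntegral.integral_mul_deriv_eq_deriv_mul
      (fun x _ => huderiv x) (fun x _ => hFderiv x)
      ((continuous_const.mul hucont).intervalIntegrable 0 L)
      (hgcont.intervalIntegrable 0 L)
  have hEq : Set.EqOn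
      (fun r => Complex.exp ((inner ℝ a (w (r + s) - w s) : ℝ) * Complex.I - 2 * b * r))
      (fun x => u x * g x) (Set.uIcc (0:ℝ) L) := by
    intro r hr
    rw [Set.uIcc_of_le hL0] at hr
    have hrs : r + s ∈ Set.Icc (0:ℝ) T := ⟨by linarith [hr.1, hs.1], by linarith [hr.2]⟩
    simp only [hu_def, hg_def, hg0_def, hc_def, hπid _ hrs]
    rw [inner_sub_right, ← Complex.exp_add, ← Complex.exp_add]
    congr 1
    push_cast
    ring
  rw [intervalIntegral.integral_congr hEq, ibp]
  have hF0 : F 0 = 0 := by rw [hF_def]; simp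
  rw [hF0, mul_zero, sub_zero]
  -- term 1
  have hterm1 : ‖u L * F L‖ ≤ M / A * (K1 * b ^ (-γ)) := by
    rw [norm_mul, hunorm]
    have hFL := hFbound L hL0 le_rfl
    have hexp0 : Real.exp (-(2*b*L)) ≤ 1 := by
      rw [← Real.exp_zero]
      exact Real.exp_le_exp.mpr (by nlinarith)
    have hkey : Real.exp (-(2*b*L)) * (L ^ γ) ≤ K1 * b ^ (-γ) := by
      have hbγ : (0:ℝ) ≤ b ^ (-γ) := (Real.rpow_pos_of_pos hb0 _).le
      have hLγ : (0:ℝ) ≤ L ^ γ := Real.rpow_nonneg hL0 _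
      rcases le_total (b * L) 1 with hbL | hbL
      · have h1 : L ^ γ ≤ b ^ (-γ) := by
          rw [Real.rpow_neg hb0.le, ← Real.inv_rpow hb0.le]
          apply Real.rpow_le_rpow hL0 _ hγ.le
          rw [← one_div]
          exact (le_div_iff₀ hb0).mpr (by linarith [mul_comm b L])
        calc Real.exp (-(2*b*L)) * L ^ γ
            ≤ 1 * L ^ γ := mul_le_mul_of_nonneg_right hexp0 hLγ
          _ = L ^ γ := one_mul _
          _ ≤ b ^ (-γ) := h1
          _ ≤ K1 * b ^ (-γ) := le_mul_of_one_le_left hbγ hK1pos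
      · have h2 := exp_neg_le_aux (q := γ+1) (x := 2*b*L) (by linarith) (by positivity)
        have h3 : (2*b*L) ^ (-(γ+1)) = 2 ^ (-(γ+1)) * b ^ (-(γ+1)) * L ^ (-(γ+1)) := by
          rw [Real.mul_rpow (by positivity) hLpos.le, Real.mul_rpow (by norm_num) hb0.le]
        have h4 : L ^ γ * L ^ (-(γ+1)) = L⁻¹ := by
          rw [← Real.rpow_add hLpos, show γ + -(γ+1) = -1 by ring, Real.rpow_neg_one]
        have h5 : L⁻¹ ≤ b := by
          rw [inv_le_iff_one_le_mul₀ hLpos]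
          linarith
        have h6 : (2:ℝ) ^ (-(γ+1)) ≤ 1 :=
          Real.rpow_le_one_of_one_le_of_nonpos one_le_two (by linarith)
        have h7 : b ^ (-(γ+1)) * b = b ^ (-γ) := by
          rw [show -γ = -(γ+1) + 1 by ring, Real.rpow_add hb0, Real.rpow_one]
        calc Real.exp (-(2*b*L)) * L ^ γ
            ≤ ((γ+1) ^ (γ+1) * (2*b*L) ^ (-(γ+1))) * L ^ γ := by
              apply mul_le_mul_of_nonneg_right h2 hLγ
          _ = (γ+1) ^ (γ+1) * (2 ^ (-(γ+1)) * b ^ (-(γ+1))) * (L ^ γ * L ^ (-(γ+1))) := by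
              rw [h3]; ring
          _ = (γ+1) ^ (γ+1) * (2 ^ (-(γ+1)) * b ^ (-(γ+1))) * L⁻¹ := by rw [h4]
          _ ≤ (γ+1) ^ (γ+1) * (1 * b ^ (-(γ+1))) * b := by
              have hb' : (0:ℝ) ≤ b ^ (-(γ+1)) := (Real.rpow_pos_of_pos hb0 _).le
              have hstep : (2:ℝ) ^ (-(γ+1)) * b ^ (-(γ+1)) ≤ 1 * b ^ (-(γ+1)) :=
                mul_le_mul_of_nonneg_right h6 hb'
              have hL' : (0:ℝ) ≤ L⁻¹ := by positivity
              apply mul_le_mul (mul_le_mul_of_nonneg_left hstep hγ1pos.le) h5 hL'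
              positivity
          _ = (γ+1) ^ (γ+1) * b ^ (-γ) := by rw [one_mul, mul_assoc, h7]
          _ ≤ K1 * b ^ (-γ) := by
              apply mul_le_mul_of_nonneg_right _ hbγ
              rw [hK1_def]; linarith
    calc Real.exp (-(2*b*L)) * ‖F L‖
        ≤ Real.exp (-(2*b*L)) * (M * L ^ γ / A) := by
          exact mul_le_mul_of_nonneg_left hFL (Real.exp_pos _).le
      _ = M / A * (Real.exp (-(2*b*L)) * L ^ γ) := by ring
      _ ≤ M / A * (K1 * b ^ (-γ)) :=
          mul_le_mul_of_nonneg_left hkey (div_nonneg hM hA0.le)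
  -- term 2
  obtain ⟨D, hD_def⟩ : ∃ D : ℝ, D = M / A * ((2*b) * q ^ q * (2*b) ^ (-q)) := ⟨_, rfl⟩
  have h2bq : (0:ℝ) < (2*b) ^ (-q) := Real.rpow_pos_of_pos (by linarith) _
  have hD0 : 0 ≤ D := by
    rw [hD_def]
    exact mul_nonneg (div_nonneg hM hA0.le) (by positivity)
  have hterm2 : ‖∫ x in (0:ℝ)..L, ((-(2*b):ℝ):ℂ) * u x * F x‖ ≤ D * L ^ (1-p) / (1-p) := by
    have hint : IntervalIntegrable (fun t : ℝ => D * t ^ (-p)) volume 0 L :=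
      (intervalIntegral.intervalIntegrable_rpow' (by linarith)).const_mul D
    have hptw : ∀ᵐ t ∂(volume.restrict (Set.uIoc (0:ℝ) L)),
        ‖((-(2*b):ℝ):ℂ) * u t * F t‖ ≤ D * t ^ (-p) := by
      refine (ae_restrict_iff' measurableSet_uIoc).mpr (Filter.Eventually.of_forall ?_)
      intro t ht
      rw [Set.uIoc_of_le hL0] at ht
      obtain ⟨ht0, htL⟩ := ht
      rw [norm_mul, norm_mul, hunorm]
      have h1 : ‖((-(2*b):ℝ):ℂ)‖ = 2*b := by
        rw [Complex.norm_real, Real.norm_eq_abs, abs_neg, abs_of_pos (by linarith)]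
      rw [h1]
      have h3 := hFbound t ht0.le htL
      have h4 := exp_neg_le_aux (q := q) (x := 2*b*t) hq0 (by positivity)
      have h5 : t ^ γ * t ^ (-q) = t ^ (-p) := by
        rw [← Real.rpow_add ht0, show γ + -q = -p by rw [hq_def]; ring]
      calc 2*b * Real.exp (-(2*b*t)) * ‖F t‖
          ≤ 2*b * (q ^ q * (2*b*t) ^ (-q)) * (M * t ^ γ / A) := by
            apply mul_le_mul
            · exact mul_le_mul_of_nonneg_left h4 (by linarith)
            · exact h3
            · exact norm_nonneg _
            · positivity
        _ = (M / A * ((2*b) * q ^ q * (2*b) ^ (-q))) * (t ^ γ * t ^ (-q)) := by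
            rw [Real.mul_rpow (by positivity) ht0.le]; ring
        _ = D * t ^ (-p) := by rw [h5, hD_def]
    calc ‖∫ x in (0:ℝ)..L, ((-(2*b):ℝ):ℂ) * u x * F x‖
        ≤ |∫ t in (0:ℝ)..L, D * t ^ (-p)| :=
          intervalIntegral.norm_integral_le_abs_of_norm_le hptw hint
      _ = D * L ^ (1-p) / (1-p) := by
          rw [intervalIntegral.integral_const_mul, integral_rpow (Or.inl (by linarith)),
            Real.zero_rpow (by linarith : -p + 1 ≠ 0), show -p + 1 = 1 - p by ring, sub_zero]
          rw [abs_of_nonneg, mul_div_assoc]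
          apply mul_nonneg hD0
          apply div_nonneg (Real.rpow_nonneg hL0 _) (by linarith)
  -- assembling
  have hterm2' : D * L ^ (1-p) / (1-p) ≤ M / A * (K2 * b ^ (1-θ)) := by
    have e1 : (2*b) * (2*b) ^ (-q) = (2*b) ^ (1-q) := by
      rw [show (1:ℝ)-q = 1 + -q by ring, Real.rpow_add (by linarith), Real.rpow_one]
    have e2 : (2*b) ^ ((1:ℝ)-q) = 2 ^ ((1:ℝ)-q) * b ^ ((1:ℝ)-q) :=
      Real.mul_rpow (by norm_num) hb0.le
    have i1 : (2:ℝ) ^ ((1:ℝ)-q) ≤ 2 := by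
      calc (2:ℝ) ^ ((1:ℝ)-q) ≤ 2 ^ (1:ℝ) :=
            Real.rpow_le_rpow_of_exponent_le one_le_two (by linarith)
        _ = 2 := Real.rpow_one 2
    have i2 : b ^ ((1:ℝ)-q) ≤ b ^ ((1:ℝ)-θ) :=
      Real.rpow_le_rpow_of_exponent_le hb (by rw [hq_def]; linarith)
    have hbq' : (0:ℝ) ≤ b ^ ((1:ℝ)-q) := (Real.rpow_pos_of_pos hb0 _).le
    have hDb : (2*b) * (2*b) ^ (-q) ≤ 2 * b ^ ((1:ℝ)-θ) := by
      rw [e1, e2]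
      exact mul_le_mul i1 i2 hbq' (by norm_num)
    have hL1p : L ^ ((1:ℝ)-p) ≤ 1 + T := by
      calc L ^ ((1:ℝ)-p) ≤ (1+T) ^ ((1:ℝ)-p) :=
            Real.rpow_le_rpow hL0 (by rw [hL_def]; linarith [hs.1]) (by linarith)
        _ ≤ (1+T) ^ (1:ℝ) :=
            Real.rpow_le_rpow_of_exponent_le (by linarith) (by linarith)
        _ = 1 + T := Real.rpow_one _
    have hnum : D * L ^ ((1:ℝ)-p) ≤ (M / A * q ^ q) * (2 * b ^ ((1:ℝ)-θ)) * (1 + T) := by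
      have hMA : (0:ℝ) ≤ M / A := div_nonneg hM hA0.le
      calc D * L ^ ((1:ℝ)-p)
          = (M / A * q ^ q) * ((2*b) * (2*b) ^ (-q)) * L ^ ((1:ℝ)-p) := by
            rw [hD_def]; ring
        _ ≤ (M / A * q ^ q) * (2 * b ^ ((1:ℝ)-θ)) * (1 + T) := by
            apply mul_le_mul (mul_le_mul_of_nonneg_left hDb (by positivity))
              hL1p (Real.rpow_nonneg hL0 _)
            positivity
    calc D * L ^ ((1:ℝ)-p) / (1-p)
        ≤ (M / A * q ^ q) * (2 * b ^ ((1:ℝ)-θ)) * (1 + T) / (1-p) := by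
          exact (div_le_div_iff_of_pos_right (by linarith : (0:ℝ) < 1 - p)).mpr hnum
      _ = M / A * (K2 * b ^ ((1:ℝ)-θ)) := by
          rw [hK2_def]; field_simp
  calc ‖u L * F L - ∫ x in (0:ℝ)..L, ((-(2*b):ℝ):ℂ) * u x * F x‖
      ≤ ‖u L * F L‖ + ‖∫ x in (0:ℝ)..L, ((-(2*b):ℝ):ℂ) * u x * F x‖ := norm_sub_le _ _
    _ ≤ M / A * (K1 * b ^ (-γ)) + M / A * (K2 * b ^ (1-θ)) := by
        have := hterm2.trans hterm2'
        linarith [hterm1]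
    _ ≤ M / A * (K1 * b ^ (1-θ)) + M / A * (K2 * b ^ (1-θ)) := by
        have hmono : b ^ (-γ) ≤ b ^ (1-θ) :=
          Real.rpow_le_rpow_of_exponent_le hb (by linarith)
        have hMA : (0:ℝ) ≤ M / A := div_nonneg hM hA0.le
        have : M / A * (K1 * b ^ (-γ)) ≤ M / A * (K1 * b ^ (1-θ)) :=
          mul_le_mul_of_nonneg_left
            (mul_le_mul_of_nonneg_left hmono (by linarith : (0:ℝ) ≤ K1)) hMA
        linarith
    _ = M / A * ((K1 + K2) * b ^ (1-θ)) := by ring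
    _ ≤ 2 * M / (1 + ‖a‖ ^ ρ) * ((K1 + K2) * b ^ (1-θ)) := by
        apply mul_le_mul_of_nonneg_right hRHSfac
        positivity
    _ = 2 * (K1 + K2) * M * b ^ (1-θ) / (1 + ‖a‖ ^ ρ) := by ring
end
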